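/- For every Ẑ ∈ M_opt, setting P₂ := Z*/n: tr(P₂(Z* − Ẑ)) = (1/n)·tr(Z*(Z* − Ẑ)) = (1/n)·‖Z* − Ẑ‖₁ ≤ 2(n−1). -/

import Mathlib

open Matrix Finset

noncomputable section


lemma abs_entry_le_one {n : ℕ} {Z : Matrix (Fin n) (Fin n) ℝ}
    (hZ : Z.PosSemidef) (hd : ∀ i, Z i i = 1) (i j : Fin n) : |Z i j| ≤ 1 := by
  rcases eq_or_ne i j with rfl | hij
  · simp [hd i]
  have hsym : Z j i = Z i j := by
    have := hZ.isHermitian.apply j i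
    exact this.symm
  have key : ∀ c : ℝ, 0 ≤ 1 + c^2 + 2 * c * Z i j := by
    intro c
    have h := hZ.dotProduct_mulVec_nonneg ((Pi.single i 1 : Fin n → ℝ) + c • (Pi.single j 1 : Fin n → ℝ))
    simp only [star_trivial] at h
    simp only [Matrix.mulVec_add, Matrix.mulVec_smul, dotProduct_add,
      add_dotProduct, smul_dotProduct, dotProduct_smul,
      Matrix.mulVec_single, single_dotProduct, smul_eq_mul, op_smul_eq_mul, Matrix.col_apply, mul_one, one_mul] at h
    rw [hd i, hd j, hsym] at h
    nlinarith [h]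
  have h1 := key 1
  have h2 := key (-1)
  rw [abs_le]
  constructor <;> nlinarith


def opNorm {k l : ℕ} (A : Matrix (Fin k) (Fin l) ℝ) : ℝ :=
  ‖(Matrix.toEuclideanLin A).toContinuousLinearMap‖

def ip {n : ℕ} (A B : Matrix (Fin n) (Fin n) ℝ) : ℝ := Matrix.trace (Aᵀ * B)

def ell1Norm {k l : ℕ} (M : Matrix (Fin k) (Fin l) ℝ) : ℝ := ∑ i, ∑ j, |M i j|

def frobNorm {k l : ℕ} (M : Matrix (Fin k) (Fin l) ℝ) : ℝ :=
  Real.sqrt (∑ i, ∑ j, (M i j) ^ 2)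

def euclNorm {k : ℕ} (x : Fin k → ℝ) : ℝ := Real.sqrt (∑ i, x i ^ 2)

def En (n : ℕ) : Matrix (Fin n) (Fin n) ℝ := Matrix.of fun _ _ => 1

def centering (n : ℕ) : Matrix (Fin n) (Fin n) ℝ := 1 - ((n : ℝ)⁻¹) • En n

def Mopt (n : ℕ) : Set (Matrix (Fin n) (Fin n) ℝ) :=
  {Z | Z.PosSemidef ∧ ∀ i, Z i i = 1}

def MGplus (n : ℕ) : Set (Matrix (Fin n) (Fin n) ℝ) :=
  {Z | Z.PosSemidef ∧ ∀ i, Z i i ≤ 1}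

def MoptPlus (n : ℕ) : Set (Matrix (Fin n) (Fin n) ℝ) :=
  {Z | Z.PosSemidef ∧ (∀ i, Z i i = 1) ∧ ip (En n) Z = 0}

def u2 (n n₁ : ℕ) : Fin n → ℝ := fun j => if (j : ℕ) < n₁ then 1 else -1

def Zstar (n n₁ : ℕ) : Matrix (Fin n) (Fin n) ℝ :=
  Matrix.vecMulVec (u2 n n₁) (u2 n n₁)

def wmin (n n₁ n₂ : ℕ) : ℝ := min ((n₁ : ℝ) / n) ((n₂ : ℝ) / n)

def vref (n n₁ n₂ : ℕ) : Fin n → ℝ :=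
  fun j => if (j : ℕ) < n₁ then (n₂ : ℝ) / n else -((n₁ : ℝ) / n)

def Rmat (n n₁ n₂ p : ℕ) (γ : ℝ) : Matrix (Fin n) (Fin n) ℝ :=
  ((p : ℝ) * γ) • Matrix.vecMulVec (vref n n₁ n₂) (vref n n₁ n₂)


/-- for `Ẑ ∈ M_opt` and `P₂ = Z*/n`,
`tr(P₂(Z* - Ẑ)) = tr(Z*(Z* - Ẑ))/n = ‖Z* - Ẑ‖₁/n ≤ 2(n-1)`. -/
theorem trace_P2_identity (n n₁ n₂ : ℕ) (hn : n = n₁ + n₂)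
    (hn₁ : 0 < n₁) (hn₂ : 0 < n₂)
    (Zhat : Matrix (Fin n) (Fin n) ℝ) (hZhat : Zhat ∈ Mopt n) :
    Matrix.trace (((n : ℝ)⁻¹ • Zstar n n₁) * (Zstar n n₁ - Zhat)) =
      (n : ℝ)⁻¹ * Matrix.trace (Zstar n n₁ * (Zstar n n₁ - Zhat)) ∧
    (n : ℝ)⁻¹ * Matrix.trace (Zstar n n₁ * (Zstar n n₁ - Zhat)) =
      (n : ℝ)⁻¹ * ell1Norm (Zstar n n₁ - Zhat) ∧
    (n : ℝ)⁻¹ * ell1Norm (Zstar n n₁ - Zhat) ≤ 2 * ((n : ℝ) - 1) := by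
  obtain ⟨hpsd, hdiag⟩ := hZhat
  have habs : ∀ i j, |Zhat i j| ≤ 1 := abs_entry_le_one hpsd hdiag
  have hn2 : 2 ≤ n := by omega
  have hnpos : (0:ℝ) < n := by positivity
  have hu : ∀ j, u2 n n₁ j = 1 ∨ u2 n n₁ j = -1 := by
    intro j; unfold u2; split <;> simp
  set M := Zstar n n₁ - Zhat with hMdef
  have hZs : ∀ i j, Zstar n n₁ i j = u2 n n₁ i * u2 n n₁ j := by
    intro i j; simp [Zstar, Matrix.vecMulVec_apply]
  have hs1 : ∀ i j, Zstar n n₁ i j = 1 ∨ Zstar n n₁ i j = -1 := by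
    intro i j
    rcases hu i with hi | hi <;> rcases hu j with hj | hj <;>
      rw [hZs, hi, hj] <;> norm_num
  have hss : ∀ i j, Zstar n n₁ j i = Zstar n n₁ i j := by
    intro i j; rw [hZs, hZs]; ring
  have hMji : ∀ i j, M j i = Zstar n n₁ j i - Zhat j i := by
    intro i j; simp [hMdef, Matrix.sub_apply]
  have key : ∀ i j, Zstar n n₁ i j * M j i = |M j i| := by
    intro i j
    have h1 := habs j i
    rw [abs_le] at h1
    have hnn : 0 ≤ Zstar n n₁ i j * M j i := by
      rcases hs1 i j with h | h <;> rw [hMji i j, hss i j, h] <;> nlinarith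
    have habs1 : |Zstar n n₁ i j| = 1 := by
      rcases hs1 i j with h | h <;> rw [h] <;> norm_num
    calc Zstar n n₁ i j * M j i = |Zstar n n₁ i j * M j i| := (abs_of_nonneg hnn).symm
      _ = |Zstar n n₁ i j| * |M j i| := abs_mul _ _
      _ = |M j i| := by rw [habs1, one_mul]
  have htr : Matrix.trace (Zstar n n₁ * M) = ell1Norm M := by
    rw [Matrix.trace]
    simp only [Matrix.diag, Matrix.mul_apply]
    rw [ell1Norm, Finset.sum_comm]
    refine Finset.sum_congr rfl fun i _ => Finset.sum_congr rfl fun j _ => ?_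
    exact key j i
  refine ⟨?_, ?_, ?_⟩
  · rw [Matrix.smul_mul, Matrix.trace_smul, smul_eq_mul]
  · rw [htr]
  · have hMdiag : ∀ i, M i i = 0 := by
      intro i
      rw [hMji, hdiag i, hZs]
      rcases hu i with hi | hi <;> rw [hi] <;> norm_num
    have hMle : ∀ i j, |M i j| ≤ 2 := by
      intro i j
      have h1 := habs i j
      have h2 : |Zstar n n₁ i j| = 1 := by
        rcases hs1 i j with h | h <;> rw [h] <;> norm_num
      calc |M i j| = |Zstar n n₁ i j - Zhat i j| := by rw [hMdef]; rfl
        _ ≤ |Zstar n n₁ i j| + |Zhat i j| := abs_sub _ _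
        _ ≤ 1 + 1 := by rw [h2]; linarith
        _ = 2 := by norm_num
    have hrow : ∀ i : Fin n, ∑ j, |M i j| ≤ 2 * ((n : ℝ) - 1) := by
      intro i
      have h0 : |M i i| = 0 := by rw [hMdiag i]; simp
      rw [← Finset.sum_erase_add Finset.univ _ (Finset.mem_univ i), h0, add_zero]
      have hb := Finset.sum_le_card_nsmul (Finset.univ.erase i) (fun j => |M i j|) 2
        (fun j _ => hMle i j)
      have hcard : (Finset.univ.erase i).card = n - 1 := by
        rw [Finset.card_erase_of_mem (Finset.mem_univ i), Finset.card_univ, Fintype.card_fin]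
      rw [hcard] at hb
      have : ((n - 1 : ℕ) : ℝ) = (n : ℝ) - 1 := by
        have : 1 ≤ n := by omega
        push_cast [this]; ring
      calc ∑ j ∈ Finset.univ.erase i, |M i j| ≤ (n - 1 : ℕ) • (2:ℝ) := hb
        _ = 2 * ((n : ℝ) - 1) := by rw [nsmul_eq_mul, this]; ring
    have htot : ell1Norm M ≤ (n : ℝ) * (2 * ((n : ℝ) - 1)) := by
      rw [ell1Norm]
      calc ∑ i, ∑ j, |M i j| ≤ ∑ _i : Fin n, 2 * ((n : ℝ) - 1) :=
            Finset.sum_le_sum fun i _ => hrow i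
        _ = (n : ℝ) * (2 * ((n : ℝ) - 1)) := by
            rw [Finset.sum_const, Finset.card_univ, Fintype.card_fin, nsmul_eq_mul]
    calc (n : ℝ)⁻¹ * ell1Norm M ≤ (n : ℝ)⁻¹ * ((n : ℝ) * (2 * ((n : ℝ) - 1))) := by
          apply mul_le_mul_of_nonneg_left htot (by positivity)
      _ = 2 * ((n : ℝ) - 1) := by field_simp


end
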